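/- Every square quaternion matrix is similar to an upper triangular quaternion matrix: for every A ∈ Matrix (Fin n) (Fin n) ℍ there exist a unit P of the matrix ring and a matrix J with J i j = 0 whenever j < i, such that A = P * J * P⁻¹. -/

import Mathlib

notation "ℍ" => Quaternion ℝ

noncomputable def psi : ℂ →+* ℍᵐᵒᵖ where
  toFun c := MulOpposite.op (Quaternion.ofComplex c)
  map_one' := by simp
  map_mul' a b := by
    simp only [← MulOpposite.op_mul, ← map_mul]
    rw [mul_comm]
  map_zero' := by simp
  map_add' a b := by simp [MulOpposite.op_add]

section
variable {m : ℕ}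

noncomputable local instance cmod : Module ℂ (Fin m → ℍ) :=
  Module.compHom (Fin m → ℍ) psi

lemma csmul_apply (c : ℂ) (x : Fin m → ℍ) (i : Fin m) :
    (c • x) i = x i * Quaternion.ofComplex c := by
  show (psi c • x) i = _
  simp [psi, MulOpposite.smul_eq_mul_unop]

lemma real_csmul (r : ℝ) (x : Fin m → ℍ) : (r : ℂ) • x = r • x := by
  funext i
  rw [csmul_apply]
  show x i * Quaternion.ofComplex (r : ℂ) = r • x i
  have : Quaternion.ofComplex (r : ℂ) = (r : ℍ) := rfl
  rw [this, ← Quaternion.coe_commutes, Quaternion.coe_mul_eq_smul]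

lemma cfinite : Module.Finite ℂ (Fin m → ℍ) := by
  obtain ⟨S, hS⟩ := Module.finite_def.mp (inferInstance : Module.Finite ℝ (Fin m → ℍ))
  refine ⟨S, ?_⟩
  rw [eq_top_iff]
  intro x _
  have hx : x ∈ Submodule.span ℝ (S : Set (Fin m → ℍ)) := by rw [hS]; trivial
  refine Submodule.span_induction (fun y hy => Submodule.subset_span hy)
    (Submodule.zero_mem _) (fun a b _ _ ha hb => Submodule.add_mem _ ha hb)
    (fun r y _ hy => ?_) hx
  rw [← real_csmul]
  exact Submodule.smul_mem _ _ hy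

lemma exists_right_eigen (hm : 0 < m) (A : Matrix (Fin m) (Fin m) ℍ) :
    ∃ v : Fin m → ℍ, v ≠ 0 ∧ ∃ q : ℍ, A.mulVec v = fun i => v i * q := by
  haveI : Nonempty (Fin m) := ⟨⟨0, hm⟩⟩
  haveI := cfinite (m := m)
  let f : (Fin m → ℍ) →ₗ[ℂ] (Fin m → ℍ) :=
    { toFun := A.mulVec
      map_add' := fun x y => A.mulVec_add x y
      map_smul' := fun c x => by
        funext i
        simp only [RingHom.id_apply]
        rw [csmul_apply]
        show ∑ j, A i j * (c • x) j = (∑ j, A i j * x j) * Quaternion.ofComplex c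
        rw [Finset.sum_mul]
        exact Finset.sum_congr rfl fun j _ => by rw [csmul_apply, mul_assoc] }
  obtain ⟨μ, hμ⟩ := Module.End.exists_eigenvalue f
  obtain ⟨v, hv⟩ := hμ.exists_hasEigenvector
  refine ⟨v, hv.right, Quaternion.ofComplex μ, ?_⟩
  have := hv.apply_eq_smul
  funext i
  have h1 : f v = μ • v := hv.apply_eq_smul
  calc A.mulVec v i = (f v) i := rfl
    _ = (μ • v) i := by rw [h1]
    _ = v i * Quaternion.ofComplex μ := csmul_apply μ v i

end


lemma sum_one_delta {m : ℕ} (a : Fin m) (x : ℍ) (f : Fin m → ℍ)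
    (hf : ∀ t, f t = if t = a then x else 0) : ∑ t, f t = x := by
  simp [hf]

lemma sum_two_delta {m : ℕ} (a b : Fin m) (x y : ℍ) (f : Fin m → ℍ)
    (hf : ∀ t, f t = (if t = a then x else 0) + (if t = b then y else 0)) :
    ∑ t, f t = x + y := by
  simp [hf, Finset.sum_add_distrib]

lemma exists_P {n : ℕ} (v : Fin (n + 1) → ℍ) (k : Fin (n + 1)) (hk : v k ≠ 0) :
    ∃ P Pinv : Matrix (Fin (n + 1)) (Fin (n + 1)) ℍ,
      P * Pinv = 1 ∧ Pinv * P = 1 ∧ (∀ i, P i 0 = v i) := by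
  set s : Equiv.Perm (Fin (n + 1)) := Equiv.swap 0 k with hsdef
  have hss : ∀ x, s (s x) = x := fun x => Equiv.swap_apply_self _ _ x
  have hs0 : s 0 = k := Equiv.swap_apply_left 0 k
  set w : Fin (n + 1) → ℍ := fun i => v (s i) with hwdef
  have hw0 : w 0 = v k := by rw [hwdef]; simp [hs0]
  have hw0' : w 0 ≠ 0 := hw0 ▸ hk
  set c : ℍ := (w 0)⁻¹ with hc
  have hcw : c * w 0 = 1 := inv_mul_cancel₀ hw0'
  have hwc : w 0 * c = 1 := mul_inv_cancel₀ hw0'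
  set S : Matrix (Fin (n+1)) (Fin (n+1)) ℍ :=
    Matrix.of (fun i j => if j = s i then 1 else 0) with hS
  set N : Matrix (Fin (n+1)) (Fin (n+1)) ℍ :=
    Matrix.of (fun i j => if j = 0 then w i else if i = j then 1 else 0) with hN
  set Ninv : Matrix (Fin (n+1)) (Fin (n+1)) ℍ :=
    Matrix.of (fun i j => if j = 0 then (if i = 0 then c else -(w i * c))
      else if i = j then 1 else 0) with hNinv
  have hSapp : ∀ i j, S i j = if j = s i then 1 else 0 := fun i j => rfl
  have hNapp : ∀ i j, N i j = if j = 0 then w i else if i = j then 1 else 0 :=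
    fun i j => rfl
  have hNinvapp : ∀ i j, Ninv i j = if j = 0 then (if i = 0 then c else -(w i * c))
      else if i = j then 1 else 0 := fun i j => rfl
  have hSS : S * S = 1 := by
    refine Matrix.ext fun i j => ?_
    rw [Matrix.mul_apply, Matrix.one_apply,
      sum_one_delta (s i) (if i = j then 1 else 0) _ (fun t => ?_)]
    rw [hSapp, hSapp]
    by_cases hts : t = s i
    · subst hts; simp [hss, eq_comm]
    · simp [hts]
  have hNNinv : N * Ninv = 1 := by
    refine Matrix.ext fun i j => ?_
    rw [Matrix.mul_apply, Matrix.one_apply]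
    by_cases hj : j = 0
    · subst hj
      by_cases hi : i = 0
      · subst hi
        rw [sum_one_delta 0 (w 0 * c) _ (fun t => ?_), hwc, if_pos rfl]
        rw [hNapp, hNinvapp]
        by_cases ht : t = 0
        · subst ht; simp
        · simp [ht, Ne.symm ht]
      · rw [sum_two_delta 0 i (w i * c) (-(w i * c)) _ (fun t => ?_),
          add_neg_cancel, if_neg hi]
        rw [hNapp, hNinvapp]
        by_cases ht : t = 0
        · subst ht; simp [Ne.symm hi]
        · by_cases hti : t = i
          · subst hti; simp [ht]
          · simp [ht, hti, Ne.symm hti]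
    · rw [sum_one_delta j (if i = j then 1 else 0) _ (fun t => ?_)]
      rw [hNapp, hNinvapp]
      by_cases htj : t = j
      · subst htj; simp [hj]
      · simp [htj, hj]
  have hNinvN : Ninv * N = 1 := by
    refine Matrix.ext fun i j => ?_
    rw [Matrix.mul_apply, Matrix.one_apply]
    by_cases hj : j = 0
    · subst hj
      by_cases hi : i = 0
      · subst hi
        rw [sum_one_delta 0 (c * w 0) _ (fun t => ?_), hcw, if_pos rfl]
        rw [hNapp, hNinvapp]
        by_cases ht : t = 0
        · subst ht; simp
        · simp [ht, Ne.symm ht]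
      · rw [sum_two_delta 0 i (-(w i * c) * w 0) (w i) _ (fun t => ?_), if_neg hi,
          neg_mul, mul_assoc, hcw, mul_one, neg_add_cancel]
        rw [hNapp, hNinvapp]
        by_cases ht : t = 0
        · subst ht; simp [hi, Ne.symm hi]
        · by_cases hti : t = i
          · subst hti; simp [ht]
          · simp [ht, hti, Ne.symm hti]
    · rw [sum_one_delta j (if i = j then 1 else 0) _ (fun t => ?_)]
      rw [hNapp, hNinvapp]
      by_cases htj : t = j
      · subst htj; simp [hj]
      · simp [htj, hj, Ne.symm hj]
  refine ⟨S * N, Ninv * S, ?_, ?_, fun i => ?_⟩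
  · calc S * N * (Ninv * S) = S * (N * Ninv) * S := by noncomm_ring
      _ = 1 := by rw [hNNinv, mul_one, hSS]
  · calc Ninv * S * (S * N) = Ninv * (S * S) * N := by noncomm_ring
      _ = 1 := by rw [hSS, mul_one, hNinvN]
  · rw [Matrix.mul_apply, sum_one_delta (s i) (v i) _ (fun t => ?_)]
    rw [hSapp, hNapp]
    by_cases hts : t = s i
    · subst hts; simp [hwdef, hss]
    · simp [hts]

section EXT
variable {n : ℕ}

noncomputable def ext1 (M : Matrix (Fin n) (Fin n) ℍ) : Matrix (Fin (n+1)) (Fin (n+1)) ℍ :=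
  Matrix.of fun i j =>
    Fin.cases (Fin.cases (1:ℍ) (fun _ => 0) j) (fun i' => Fin.cases 0 (fun j' => M i' j') j) i

@[simp] lemma ext1_zz (M : Matrix (Fin n) (Fin n) ℍ) : ext1 M 0 0 = 1 := rfl
@[simp] lemma ext1_zs (M : Matrix (Fin n) (Fin n) ℍ) (j : Fin n) : ext1 M 0 j.succ = 0 := by
  simp [ext1]
@[simp] lemma ext1_sz (M : Matrix (Fin n) (Fin n) ℍ) (i : Fin n) : ext1 M i.succ 0 = 0 := by
  simp [ext1]
@[simp] lemma ext1_ss (M : Matrix (Fin n) (Fin n) ℍ) (i j : Fin n) :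
    ext1 M i.succ j.succ = M i j := by simp [ext1]

lemma ext1_mul (M N : Matrix (Fin n) (Fin n) ℍ) : ext1 M * ext1 N = ext1 (M * N) := by
  refine Matrix.ext fun i j => ?_
  rw [Matrix.mul_apply, Fin.sum_univ_succ]
  refine Fin.cases ?_ (fun i' => ?_) i <;> refine Fin.cases ?_ (fun j' => ?_) j <;>
    simp [Matrix.mul_apply]

lemma ext1_one : ext1 (1 : Matrix (Fin n) (Fin n) ℍ) = 1 := by
  refine Matrix.ext fun i j => ?_
  refine Fin.cases ?_ (fun i' => ?_) i <;> refine Fin.cases ?_ (fun j' => ?_) j <;>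
    simp [Matrix.one_apply, Fin.succ_ne_zero, eq_comm]
end EXT

theorem tri (n : ℕ) (A : Matrix (Fin n) (Fin n) ℍ) :
    ∃ P Pinv J : Matrix (Fin n) (Fin n) ℍ, P * Pinv = 1 ∧ Pinv * P = 1 ∧
      (∀ i j, j < i → J i j = 0) ∧ A = P * J * Pinv := by
  induction n with
  | zero =>
      exact ⟨1, 1, A, by rw [one_mul], by rw [one_mul], fun i j _ => i.elim0,
        by rw [one_mul, mul_one]⟩
  | succ n ih =>
      obtain ⟨v, hv, q, heig⟩ := exists_right_eigen (Nat.succ_pos n) A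
      obtain ⟨k, hk⟩ := Function.ne_iff.mp hv
      obtain ⟨P, Pinv, hPP, hPiP, hcol⟩ := exists_P v k hk
      set B : Matrix (Fin (n+1)) (Fin (n+1)) ℍ := Pinv * A * P with hB
      have hPe : P.mulVec (Pi.single 0 1) = v := by
        rw [Matrix.mulVec_single]
        exact funext fun i => by rw [MulOpposite.op_one, one_smul, Matrix.col_apply, hcol]
      have hPiv : Pinv.mulVec v = Pi.single 0 1 := by
        rw [← hPe, Matrix.mulVec_mulVec, hPiP, Matrix.one_mulVec]
      have hB0 : ∀ i : Fin (n+1), i ≠ 0 → B i 0 = 0 := by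
        intro i hi
        have h1 : ∀ t, (A * P) t 0 = v t * q := by
          intro t
          have : (A * P) t 0 = (A.mulVec v) t := by
            rw [Matrix.mul_apply]
            exact Finset.sum_congr rfl fun u _ => by rw [hcol]
          rw [this, heig]
        have h2 : B i 0 = ∑ t, Pinv i t * (v t * q) := by
          rw [hB, mul_assoc, Matrix.mul_apply]
          exact Finset.sum_congr rfl fun t _ => by rw [h1]
        rw [h2]
        have h3 : ∑ t, Pinv i t * (v t * q) = (∑ t, Pinv i t * v t) * q := by
          rw [Finset.sum_mul]
          exact Finset.sum_congr rfl fun t _ => (mul_assoc _ _ _).symm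
        rw [h3]
        have h4 : ∑ t, Pinv i t * v t = (Pi.single 0 1 : Fin (n+1) → ℍ) i := by
          rw [← hPiv]; rfl
        rw [h4, Pi.single_eq_of_ne hi, zero_mul]
      set B' : Matrix (Fin n) (Fin n) ℍ := Matrix.of fun i j => B i.succ j.succ with hB'
      obtain ⟨Q, Qinv, J', hQQ, hQiQ, hJtri, hBQ⟩ := ih B'
      have e1 : ext1 Q * ext1 Qinv = 1 := by rw [ext1_mul, hQQ, ext1_one]
      have e2 : ext1 Qinv * ext1 Q = 1 := by rw [ext1_mul, hQiQ, ext1_one]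
      set J : Matrix (Fin (n+1)) (Fin (n+1)) ℍ := ext1 Qinv * B * ext1 Q with hJ
      refine ⟨P * ext1 Q, ext1 Qinv * Pinv, J, ?_, ?_, ?_, ?_⟩
      · have h1 : P * ext1 Q * (ext1 Qinv * Pinv) = P * (ext1 Q * ext1 Qinv) * Pinv := by
          noncomm_ring
        rw [h1, e1, mul_one, hPP]
      · have h1 : ext1 Qinv * Pinv * (P * ext1 Q) = ext1 Qinv * (Pinv * P) * ext1 Q := by
          noncomm_ring
        rw [h1, hPiP, mul_one, e2]
      · -- triangularity of J
        intro i j hij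
        rcases Fin.eq_zero_or_eq_succ i with hi | ⟨i', rfl⟩
        · subst hi; exact absurd hij (Fin.not_lt_zero j)
        rcases Fin.eq_zero_or_eq_succ j with hj | ⟨j', rfl⟩
        · subst hj
          rw [hJ, mul_assoc, Matrix.mul_apply, Fin.sum_univ_succ]
          have hXQ : ∀ t : Fin (n+1), (B * ext1 Q) t 0 = B t 0 := by
            intro t
            rw [Matrix.mul_apply, Fin.sum_univ_succ]
            simp
          simp [hXQ, hB0 _ (Fin.succ_ne_zero _)]
        · have hij' : j' < i' := by rwa [Fin.succ_lt_succ_iff] at hij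
          have key : J i'.succ j'.succ = (Qinv * (B' * Q)) i' j' := by
            rw [hJ, mul_assoc, Matrix.mul_apply, Fin.sum_univ_succ,
              Matrix.mul_apply (M := Qinv)]
            simp only [ext1_sz, ext1_ss, zero_mul, zero_add]
            refine Finset.sum_congr rfl fun t' _ => ?_
            congr 1
            rw [Matrix.mul_apply, Fin.sum_univ_succ, Matrix.mul_apply]
            simp [hB']
          rw [key]
          have hred : Qinv * (B' * Q) = J' := by
            rw [hBQ]
            have h2 : Qinv * (Q * J' * Qinv * Q) = Qinv * Q * J' * (Qinv * Q) := by
              noncomm_ring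
            rw [h2, hQiQ, one_mul, mul_one]
          rw [hred]
          exact hJtri i' j' hij'
      · -- A = (P * ext1 Q) * J * (ext1 Qinv * Pinv)
        have h1 : P * ext1 Q * (ext1 Qinv * B * ext1 Q) * (ext1 Qinv * Pinv)
            = P * (ext1 Q * ext1 Qinv) * B * (ext1 Q * ext1 Qinv) * Pinv := by
          noncomm_ring
        rw [hJ, h1, e1, mul_one, mul_one, hB]
        have h2 : P * (Pinv * A * P) * Pinv = P * Pinv * A * (P * Pinv) := by
          noncomm_ring
        rw [h2, hPP, one_mul, mul_one]

/-- Every square quaternion matrix is similar to an upper triangular quaternion matrix. -/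
theorem exists_similar_upper_triangular {n : ℕ} (A : Matrix (Fin n) (Fin n) ℍ) :
    ∃ P J : Matrix (Fin n) (Fin n) ℍ, IsUnit P ∧ (∀ i j : Fin n, j < i → J i j = 0) ∧
      A = P * J * Ring.inverse P := by
  obtain ⟨P, Pinv, J, h1, h2, htri, hsim⟩ := tri n A
  refine ⟨P, J, ⟨⟨P, Pinv, h1, h2⟩, rfl⟩, htri, ?_⟩
  have hinv : Ring.inverse P = Pinv :=
    Ring.inverse_unit (⟨P, Pinv, h1, h2⟩ : (Matrix (Fin n) (Fin n) ℍ)ˣ)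
  rw [hinv]
  exact hsim
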